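/- In the static logit panel model, the functional-differencing moment function built from two outcomes with the same sufficient statistic has zero conditional mean for every value of the fixed effect: let ȳ = (ȳ₀, ȳ₁) and ỹ = (ỹ₀, ỹ₁) with 0 ≤ ȳ₀, ỹ₀ ≤ T₀, 0 ≤ ȳ₁, ỹ₁ ≤ T₁, and ȳ₀ + ȳ₁ = ỹ₀ + ỹ₁; define r(θ) = (C(T₀, ȳ₀) · C(T₁, ȳ₁)) / (C(T₀, ỹ₀) · C(T₁, ỹ₁)) · exp(((ȳ₁ : ℝ) − ỹ₁) · θ) and m(y, θ) = 1{y = ȳ} − r(θ) · 1{y = ỹ}. Then for all α, θ ∈ ℝ, ∑_{y₀ = 0}^{T₀} ∑_{y₁ = 0}^{T₁} m((y₀, y₁), θ) · f((y₀, y₁) | α, θ) = 0. -/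

import Mathlib

/-- The standardized logistic cdf. -/
noncomputable def logisticCdf (u : ℝ) : ℝ := 1 / (1 + Real.exp (-u))

/-- The static logit panel model likelihood of the outcome `y = (y₀, y₁)`
given fixed effect `α` and common parameter `θ`. -/
noncomputable def logitLik (T0 T1 : ℕ) (y : ℕ × ℕ) (α θ : ℝ) : ℝ :=
  (T0.choose y.1 : ℝ) * (1 - logisticCdf α) ^ (T0 - y.1) * logisticCdf α ^ y.1 *
  (T1.choose y.2 : ℝ) * (1 - logisticCdf (θ + α)) ^ (T1 - y.2) *
    logisticCdf (θ + α) ^ y.2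

/-- In the static logit panel model, the functional-differencing moment
function built from two outcomes with the same sufficient statistic has zero
conditional mean for every value of the fixed effect. -/
lemma lcdf_eq (u : ℝ) : logisticCdf u = Real.exp u / (1 + Real.exp u) := by
  unfold logisticCdf
  rw [Real.exp_neg]
  have h : (0:ℝ) < Real.exp u := Real.exp_pos u
  field_simp
  ring

lemma one_sub_lcdf (u : ℝ) : 1 - logisticCdf u = 1 / (1 + Real.exp u) := by
  rw [lcdf_eq]
  have h : (0:ℝ) < 1 + Real.exp u := by positivity
  field_simp
  ring

lemma binom_term (T k : ℕ) (hk : k ≤ T) (u : ℝ) :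
    (1 - logisticCdf u) ^ (T - k) * logisticCdf u ^ k
      = Real.exp u ^ k / (1 + Real.exp u) ^ T := by
  rw [one_sub_lcdf, lcdf_eq, div_pow, div_pow, one_pow, div_mul_div_comm, one_mul,
    ← pow_add, Nat.sub_add_cancel hk]

lemma grid_sum (T0 T1 : ℕ) (g : ℕ × ℕ → ℝ) (p : ℕ × ℕ)
    (h0 : p.1 ≤ T0) (h1 : p.2 ≤ T1) :
    ∑ y0 ∈ Finset.range (T0 + 1), ∑ y1 ∈ Finset.range (T1 + 1),
      (if (y0, y1) = p then g (y0, y1) else 0) = g p := by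
  obtain ⟨p0, p1⟩ := p
  simp only [Prod.mk.injEq, ite_and]
  have hin0 : p0 ∈ Finset.range (T0 + 1) := Finset.mem_range.2 (Nat.lt_succ_of_le h0)
  have hin1 : p1 ∈ Finset.range (T1 + 1) := Finset.mem_range.2 (Nat.lt_succ_of_le h1)
  rw [Finset.sum_eq_single p0]
  · simp only [if_pos rfl]
    rw [Finset.sum_eq_single p1]
    · simp
    · intro b _ hb; simp [hb]
    · intro h; exact absurd hin1 h
  · intro b _ hb
    simp [hb]
  · intro h; exact absurd hin0 h

theorem stmt_16 (T0 T1 : ℕ) (hT0 : 0 < T0) (hT1 : 0 < T1)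
    (yb yt : ℕ × ℕ)
    (hyb0 : yb.1 ≤ T0) (hyb1 : yb.2 ≤ T1)
    (hyt0 : yt.1 ≤ T0) (hyt1 : yt.2 ≤ T1)
    (hstat : yb.1 + yb.2 = yt.1 + yt.2)
    (r : ℝ → ℝ)
    (hr : ∀ θ, r θ =
      ((T0.choose yb.1 : ℝ) * (T1.choose yb.2 : ℝ)) /
        ((T0.choose yt.1 : ℝ) * (T1.choose yt.2 : ℝ)) *
        Real.exp (((yb.2 : ℝ) - (yt.2 : ℝ)) * θ))
    (m : ℕ × ℕ → ℝ → ℝ)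
    (hm : ∀ y θ, m y θ =
      (if y = yb then (1 : ℝ) else 0) - r θ * (if y = yt then (1 : ℝ) else 0)) :
    ∀ α θ : ℝ,
      ∑ y0 ∈ Finset.range (T0 + 1), ∑ y1 ∈ Finset.range (T1 + 1),
        m (y0, y1) θ * logitLik T0 T1 (y0, y1) α θ = 0 := by
  intro α θ
  simp only [hm, sub_mul, ite_mul, one_mul, zero_mul, mul_assoc,
    Finset.sum_sub_distrib, ← Finset.mul_sum]
  rw [grid_sum T0 T1 (fun y => logitLik T0 T1 y α θ) yb hyb0 hyb1,
    grid_sum T0 T1 (fun y => logitLik T0 T1 y α θ) yt hyt0 hyt1]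
  have hlik : ∀ p : ℕ × ℕ, p.1 ≤ T0 → p.2 ≤ T1 →
      logitLik T0 T1 p α θ = (T0.choose p.1 : ℝ) * (T1.choose p.2 : ℝ) *
        (Real.exp α ^ p.1 * Real.exp (θ + α) ^ p.2) /
        ((1 + Real.exp α) ^ T0 * (1 + Real.exp (θ + α)) ^ T1) := by
    intro p h0 h1
    unfold logitLik
    rw [show (T0.choose p.1 : ℝ) * (1 - logisticCdf α) ^ (T0 - p.1) * logisticCdf α ^ p.1 *
          (T1.choose p.2 : ℝ) * (1 - logisticCdf (θ + α)) ^ (T1 - p.2) *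
          logisticCdf (θ + α) ^ p.2
        = (T0.choose p.1 : ℝ) * (T1.choose p.2 : ℝ) *
          ((1 - logisticCdf α) ^ (T0 - p.1) * logisticCdf α ^ p.1) *
          ((1 - logisticCdf (θ + α)) ^ (T1 - p.2) * logisticCdf (θ + α) ^ p.2) by ring,
      binom_term T0 p.1 h0 α, binom_term T1 p.2 h1 (θ + α)]
    field_simp
  rw [hlik yb hyb0 hyb1, hlik yt hyt0 hyt1, hr, sub_eq_zero]
  have hct0 : (T0.choose yt.1 : ℝ) ≠ 0 := by
    exact_mod_cast (Nat.choose_pos hyt0).ne'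
  have hct1 : (T1.choose yt.2 : ℝ) ≠ 0 := by
    exact_mod_cast (Nat.choose_pos hyt1).ne'
  have hD0 : ((1 + Real.exp α) ^ T0 : ℝ) ≠ 0 := by positivity
  have hD1 : ((1 + Real.exp (θ + α)) ^ T1 : ℝ) ≠ 0 := by positivity
  have hEA : Real.exp (θ + α) = Real.exp θ * Real.exp α := Real.exp_add θ α
  have key : Real.exp (((yb.2 : ℝ) - (yt.2 : ℝ)) * θ) * Real.exp θ ^ yt.2
      = Real.exp θ ^ yb.2 := by
    rw [← Real.exp_nat_mul, ← Real.exp_nat_mul, ← Real.exp_add]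
    congr 1
    ring
  have hApow : Real.exp α ^ (yb.1 + yb.2) = Real.exp α ^ (yt.1 + yt.2) := by
    rw [hstat]
  field_simp
  rw [hEA]
  have lhs_eq : ∀ (p : ℕ × ℕ), Real.exp α ^ p.1 * (Real.exp θ * Real.exp α) ^ p.2
      = Real.exp θ ^ p.2 * Real.exp α ^ (p.1 + p.2) := by
    intro p; rw [mul_pow, pow_add]; ring
  have key' : Real.exp (θ * ((yb.2 : ℝ) - (yt.2 : ℝ))) * Real.exp θ ^ yt.2
      = Real.exp θ ^ yb.2 := by rw [mul_comm θ]; exact key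
  linear_combination ((T0.choose yb.1 : ℝ) * (T1.choose yb.2 : ℝ)) * lhs_eq yb
    - ((T0.choose yb.1 : ℝ) * (T1.choose yb.2 : ℝ)) * Real.exp (θ * ((yb.2 : ℝ) - (yt.2 : ℝ))) * lhs_eq yt
    + ((T0.choose yb.1 : ℝ) * (T1.choose yb.2 : ℝ)) * Real.exp θ ^ yb.2 * hApow
    - ((T0.choose yb.1 : ℝ) * (T1.choose yb.2 : ℝ)) * Real.exp α ^ (yt.1 + yt.2) * key'
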